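/- arXiv:1803.03121 — 4 statements merged into one kernel-verified Lean document; each statement's English description precedes it below -/
import Mathlib

section
/- Let α, β be complex numbers with Re(α) > 0 and Re(β) > 1, let p > 0 be real, and let x, y be complex with Re(x) > 0, Re(y) > 0. Then ᴪB_p^{(α,β)}(x,y) = 2 ∫₀^{π/2} cos^{2x−1}(θ) sin^{2y−1}(θ) ₁Ψ₁(α,β; −p sec²(θ) csc²(θ)) dθ. -/
open MeasureTheory Real Set

/-- The Wright function `₁Ψ₁(α,β;z) = ∑ zⁿ/(n! Γ(αn+β))`. -/
noncomputable def wright (α β z : ℂ) : ℂ :=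
  ∑' n : ℕ, z ^ n / ((n.factorial : ℂ) * Complex.Gamma (α * n + β))

/-- The Ψ-beta function `ᴪB_p^{(α,β)}(x,y)`. -/
noncomputable def psiBeta (α β : ℂ) (p : ℝ) (x y : ℂ) : ℂ :=
  ∫ t in (0:ℝ)..1, (t : ℂ) ^ (x - 1) * ((1 : ℂ) - t) ^ (y - 1) *
    wright α β (-(p : ℂ) / (t * (1 - t)))

/-- The function `ᴪΓ^{(α,β)}(s) = ∫₀^∞ v^{s-1} ₁Ψ₁(α,β;-v) dv`. -/
noncomputable def psiGamma (α β s : ℂ) : ℂ :=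
  ∫ v in Ioi (0:ℝ), (v : ℂ) ^ (s - 1) * wright α β (-(v : ℂ))

/-- The Ψ-gamma function `ᴪΓ_p^{(α,β)}(x)`. -/
noncomputable def psiGammaP (α β : ℂ) (p : ℝ) (x : ℂ) : ℂ :=
  ∫ t in Ioi (0:ℝ), (t : ℂ) ^ (x - 1) * wright α β (-(t : ℂ) - p / t)

/-- The classical Euler beta function `B(x,y) = Γ(x)Γ(y)/Γ(x+y)`. -/
noncomputable def eulerBeta (x y : ℂ) : ℂ :=
  Complex.Gamma x * Complex.Gamma y / Complex.Gamma (x + y)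

/-- The Pochhammer symbol `(a)_n = a(a+1)⋯(a+n-1)`. -/
noncomputable def poch (a : ℂ) (n : ℕ) : ℂ := (ascPochhammer ℂ n).eval a

/-- The Ψ-Gauss hypergeometric function `ᴪF_p^{(α,β)}(a,b;c;z)`. -/
noncomputable def psiF (α β : ℂ) (p : ℝ) (a b c z : ℂ) : ℂ :=
  ∑' n : ℕ, poch a n * (psiBeta α β p (b + n) (c - b) / eulerBeta b (c - b)) *
    z ^ n / (n.factorial : ℂ)

/-- The Ψ-confluent hypergeometric function `ᴪΦ_p^{(α,β)}(b;c;z)`. -/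
noncomputable def psiPhi (α β : ℂ) (p : ℝ) (b c z : ℂ) : ℂ :=
  ∑' n : ℕ, (psiBeta α β p (b + n) (c - b) / eulerBeta b (c - b)) *
    z ^ n / (n.factorial : ℂ)

/-- The classical Gauss hypergeometric series `₂F₁(a,b;c;z)`. -/
noncomputable def hyp2F1 (a b c z : ℂ) : ℂ :=
  ∑' n : ℕ, poch a n * poch b n / poch c n * z ^ n / (n.factorial : ℂ)

/-- The classical confluent hypergeometric (Kummer) function `Φ(b;c;z)`. -/
noncomputable def kummerPhi (b c z : ℂ) : ℂ :=
  ∑' n : ℕ, poch b n / poch c n * z ^ n / (n.factorial : ℂ)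


lemma cpow_sq_pos (r : ℝ) (hr : 0 < r) (w : ℂ) : ((r:ℂ)^2)^w = (r:ℂ)^(2*w) := by
  have him : (Complex.log (r:ℂ) * 2).im = 0 := by
    rw [← Complex.ofReal_log hr.le]; simp
  have h : (r:ℂ)^(2:ℂ) = (r:ℂ)^2 := Complex.cpow_natCast _ 2
  rw [← h, ← Complex.cpow_mul _ (by rw [him]; exact neg_neg_iff_pos.mpr Real.pi_pos)
    (by rw [him]; exact Real.pi_pos.le)]

lemma cos_sq_image : (fun θ : ℝ => Real.cos θ ^ 2) '' Ioo 0 (π/2) = Ioo 0 1 := by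
  ext t
  constructor
  · rintro ⟨θ, ⟨h0, h1⟩, rfl⟩
    have hc : 0 < Real.cos θ := Real.cos_pos_of_mem_Ioo ⟨by linarith [Real.pi_pos], h1⟩
    have hsin : 0 < Real.sin θ := Real.sin_pos_of_pos_of_lt_pi h0 (by linarith [Real.pi_pos])
    have hpyth := Real.sin_sq_add_cos_sq θ
    refine ⟨by positivity, ?_⟩
    show Real.cos θ ^ 2 < 1
    nlinarith
  · rintro ⟨h0, h1⟩
    refine ⟨Real.arccos (Real.sqrt t), ⟨?_, ?_⟩, ?_⟩
    · have : Real.sqrt t < 1 := by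
        rw [show (1:ℝ) = Real.sqrt 1 by simp]
        exact Real.sqrt_lt_sqrt h0.le h1
      have := Real.arccos_pos.mpr this
      linarith
    · have : 0 < Real.sqrt t := Real.sqrt_pos.mpr h0
      have := Real.arccos_lt_pi_div_two.mpr this
      linarith
    · show Real.cos (Real.arccos (Real.sqrt t)) ^ 2 = t
      rw [Real.cos_arccos (by linarith [Real.sqrt_nonneg t]) (Real.sqrt_le_one.mpr h1.le)]
      exact Real.sq_sqrt h0.le

theorem psiBeta_trig_rep (α β : ℂ) (p : ℝ) (x y : ℂ)
    (hα : 0 < α.re) (hβ : 1 < β.re) (hp : 0 < p)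
    (hx : 0 < x.re) (hy : 0 < y.re) :
    psiBeta α β p x y =
      2 * ∫ θ in (0:ℝ)..(π/2),
        (Real.cos θ : ℂ) ^ (2 * x - 1) * (Real.sin θ : ℂ) ^ (2 * y - 1) *
          wright α β (-(p : ℂ) * ((Real.cos θ : ℂ)⁻¹) ^ 2 * ((Real.sin θ : ℂ)⁻¹) ^ 2) := by
  
  have hpi : (0:ℝ) ≤ π/2 := by positivity
  rw [psiBeta, intervalIntegral.integral_of_le zero_le_one,
    intervalIntegral.integral_of_le hpi, MeasureTheory.integral_Ioc_eq_integral_Ioo,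
    MeasureTheory.integral_Ioc_eq_integral_Ioo, ← cos_sq_image]
  have hderiv : ∀ θ ∈ Ioo (0:ℝ) (π/2), HasDerivWithinAt (fun θ : ℝ => Real.cos θ ^ 2)
      (2 * Real.cos θ * (-Real.sin θ)) (Ioo (0:ℝ) (π/2)) θ := by
    intro θ _
    have := ((Real.hasDerivAt_cos θ).fun_pow 2).hasDerivWithinAt (s := Ioo (0:ℝ) (π/2))
    rw [show (2:ℝ) * Real.cos θ * -Real.sin θ = ((2:ℕ):ℝ) * Real.cos θ ^ (2-1) * -Real.sin θ by norm_num]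
    exact this
  have hinj : InjOn (fun θ : ℝ => Real.cos θ ^ 2) (Ioo (0:ℝ) (π/2)) := by
    intro a ha b hb h
    have hca : 0 < Real.cos a := Real.cos_pos_of_mem_Ioo ⟨by linarith [Real.pi_pos, ha.1], ha.2⟩
    have hcb : 0 < Real.cos b := Real.cos_pos_of_mem_Ioo ⟨by linarith [Real.pi_pos, hb.1], hb.2⟩
    have h' : Real.cos a ^ 2 = Real.cos b ^ 2 := h
    have : Real.cos a = Real.cos b := by nlinarith
    exact Real.injOn_cos ⟨ha.1.le, by linarith [Real.pi_pos, ha.2]⟩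
      ⟨hb.1.le, by linarith [Real.pi_pos, hb.2]⟩ this
  rw [integral_image_eq_integral_abs_deriv_smul measurableSet_Ioo hderiv hinj]
  rw [show (2:ℂ) * ∫ θ in Ioo (0:ℝ) (π/2), (Real.cos θ : ℂ) ^ (2 * x - 1) *
      (Real.sin θ : ℂ) ^ (2 * y - 1) *
      wright α β (-(p : ℂ) * ((Real.cos θ : ℂ)⁻¹) ^ 2 * ((Real.sin θ : ℂ)⁻¹) ^ 2)
    = ∫ θ in Ioo (0:ℝ) (π/2), (2:ℂ) * ((Real.cos θ : ℂ) ^ (2 * x - 1) *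
      (Real.sin θ : ℂ) ^ (2 * y - 1) *
      wright α β (-(p : ℂ) * ((Real.cos θ : ℂ)⁻¹) ^ 2 * ((Real.sin θ : ℂ)⁻¹) ^ 2))
    from (MeasureTheory.integral_const_mul 2 _).symm]
  refine MeasureTheory.setIntegral_congr_fun measurableSet_Ioo fun θ hθ => ?_
  obtain ⟨h0, h1⟩ := hθ
  have hc : 0 < Real.cos θ := Real.cos_pos_of_mem_Ioo ⟨by linarith [Real.pi_pos], h1⟩
  have hs : 0 < Real.sin θ := Real.sin_pos_of_pos_of_lt_pi h0 (by linarith [Real.pi_pos])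
  have habs : |2 * Real.cos θ * (-Real.sin θ)| = 2 * Real.sin θ * Real.cos θ := by
    rw [abs_of_nonpos (by nlinarith)]; ring
  have hone : (1:ℂ) - (Real.cos θ : ℂ)^2 = (Real.sin θ : ℂ)^2 := by
    exact_mod_cast congrArg Complex.ofReal
      (show (1:ℝ) - Real.cos θ ^ 2 = Real.sin θ ^ 2 by nlinarith [Real.sin_sq_add_cos_sq θ])
  simp only [habs, Complex.real_smul, Complex.ofReal_mul, Complex.ofReal_ofNat,
    Complex.ofReal_pow]
  rw [hone, cpow_sq_pos _ hc, cpow_sq_pos _ hs]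
  have hcC : (Real.cos θ : ℂ) ≠ 0 := by exact_mod_cast hc.ne'
  have hsC : (Real.sin θ : ℂ) ≠ 0 := by exact_mod_cast hs.ne'
  have harg : -(p:ℂ) / ((Real.cos θ : ℂ)^2 * (Real.sin θ : ℂ)^2)
      = -(p : ℂ) * ((Real.cos θ : ℂ)⁻¹) ^ 2 * ((Real.sin θ : ℂ)⁻¹) ^ 2 := by
    field_simp
  rw [harg]
  have hcx : (Real.cos θ : ℂ) ^ (2*(x-1)) * (Real.cos θ : ℂ) = (Real.cos θ : ℂ) ^ (2*x-1) := by
    rw [show (2:ℂ)*x-1 = 2*(x-1) + 1 by ring, Complex.cpow_add _ _ hcC, Complex.cpow_one]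
  have hsy : (Real.sin θ : ℂ) ^ (2*(y-1)) * (Real.sin θ : ℂ) = (Real.sin θ : ℂ) ^ (2*y-1) := by
    rw [show (2:ℂ)*y-1 = 2*(y-1) + 1 by ring, Complex.cpow_add _ _ hsC, Complex.cpow_one]
  rw [← hcx, ← hsy]
  ring
end

section
/- Let α, β be complex numbers with Re(α) > 0 and Re(β) > 1, let p > 0 be real, and let x, y be complex with Re(x) > 0, Re(y) > 0. Then ᴪB_p^{(α,β)}(x,y) = ∫₀^∞ u^{x−1}/(1+u)^{x+y} · ₁Ψ₁(α,β; −2p − p(u + 1/u)) du. -/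
open MeasureTheory Real Set

theorem psiBeta_Ioi_rep (α β : ℂ) (p : ℝ) (x y : ℂ)
    (hα : 0 < α.re) (hβ : 1 < β.re) (hp : 0 < p)
    (hx : 0 < x.re) (hy : 0 < y.re) :
    psiBeta α β p x y =
      ∫ u in Ioi (0:ℝ), (u : ℂ) ^ (x - 1) / ((1 : ℂ) + u) ^ (x + y) *
        wright α β (-2 * (p : ℂ) - (p : ℂ) * ((u : ℂ) + (u : ℂ)⁻¹)) := by
  have himg : (fun u : ℝ => u / (1 + u)) '' Ioi (0:ℝ) = Ioo (0:ℝ) 1 := by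
    ext t
    constructor
    · rintro ⟨u, hu, rfl⟩
      have hu0 : (0:ℝ) < u := hu
      have h1 : (0:ℝ) < 1 + u := by linarith
      exact ⟨div_pos hu0 h1, by rw [div_lt_one h1]; linarith⟩
    · intro ht
      refine ⟨t / (1 - t), div_pos ht.1 (by linarith [ht.2]), ?_⟩
      have h1 : (1:ℝ) - t ≠ 0 := by linarith [ht.2]
      field_simp
      ring
  have hderiv : ∀ u ∈ Ioi (0:ℝ),
      HasDerivWithinAt (fun u : ℝ => u / (1 + u)) (((1+u)^2)⁻¹) (Ioi 0) u := by
    intro u hu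
    have hu0 : (0:ℝ) < u := hu
    have h1 : (1:ℝ) + u ≠ 0 := by linarith
    have := (hasDerivAt_id u).div ((hasDerivAt_const u (1:ℝ)).add (hasDerivAt_id u)) h1
    simp only [id_eq, Pi.add_apply] at this
    have h2 : (1 * (1 + u) - u * (0 + 1)) / (1 + u) ^ 2 = ((1+u)^2)⁻¹ := by
      field_simp
      ring
    rw [h2] at this
    exact this.hasDerivWithinAt
  have hinj : InjOn (fun u : ℝ => u / (1 + u)) (Ioi 0) := by
    intro a ha b hb h
    have ha0 : (0:ℝ) < a := ha
    have hb0 : (0:ℝ) < b := hb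
    have h1 : (1:ℝ) + a ≠ 0 := by linarith
    have h2 : (1:ℝ) + b ≠ 0 := by linarith
    simp only at h
    field_simp at h
    linarith
  rw [psiBeta, intervalIntegral.integral_of_le zero_le_one,
    MeasureTheory.integral_Ioc_eq_integral_Ioo, ← himg,
    MeasureTheory.integral_image_eq_integral_abs_deriv_smul measurableSet_Ioi hderiv hinj]
  refine setIntegral_congr_fun measurableSet_Ioi fun u hu => ?_
  have hu0 : (0:ℝ) < u := hu
  have hv : (0:ℝ) < 1 + u := by linarith
  have huC : (u:ℂ) ≠ 0 := by exact_mod_cast hu0.ne'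
  have hvC : (1 : ℂ) + u ≠ 0 := by
    have : ((1+u : ℝ) : ℂ) ≠ 0 := by exact_mod_cast hv.ne'
    simpa using this
  have harg : ((1 : ℂ) + u).arg ≠ Real.pi := by
    have : ((1:ℂ)+u) = ((1+u : ℝ) : ℂ) := by push_cast; ring
    rw [this, Complex.arg_ofReal_of_nonneg hv.le]
    exact Real.pi_ne_zero.symm
  have keyinv : ∀ s : ℂ, (((1+u)⁻¹ : ℝ) : ℂ) ^ s = ((1:ℂ)+u) ^ (-s) := by
    intro s
    rw [Complex.ofReal_inv]
    have : ((1+u : ℝ) : ℂ) = (1:ℂ)+u := by push_cast; ring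
    rw [this, Complex.inv_cpow _ _ harg, ← Complex.cpow_neg]
  have key1 : ((u / (1+u) : ℝ) : ℂ) ^ (x-1) = (u:ℂ)^(x-1) * ((1:ℂ)+u)^(-(x-1)) := by
    rw [show (u / (1+u) : ℝ) = u * (1+u)⁻¹ by ring, Complex.ofReal_mul,
      Complex.mul_cpow_ofReal_nonneg hu0.le (by positivity), keyinv]
  have key2 : ((1:ℂ) - ((u / (1+u) : ℝ) : ℂ)) ^ (y-1) = ((1:ℂ)+u)^(-(y-1)) := by
    have : (1:ℂ) - ((u / (1+u) : ℝ) : ℂ) = (((1+u)⁻¹ : ℝ) : ℂ) := by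
      rw [show ((1+u)⁻¹ : ℝ) = 1 - u/(1+u) by field_simp; ring]
      push_cast; ring
    rw [this, keyinv]
  have key3 : ((((1+u)^2)⁻¹ : ℝ) : ℂ) = ((1:ℂ)+u) ^ (-(2:ℂ)) := by
    push_cast
    rw [show ((2:ℂ)) = ((2:ℕ):ℂ) by norm_num, Complex.cpow_neg, Complex.cpow_natCast]
  have keyw : -(p:ℂ) / (((u / (1+u) : ℝ) : ℂ) * (1 - ((u / (1+u) : ℝ) : ℂ))) =
      -2 * (p:ℂ) - (p:ℂ) * ((u:ℂ) + (u:ℂ)⁻¹) := by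
    have hD : ((u / (1+u) : ℝ) : ℂ) * (1 - ((u / (1+u) : ℝ) : ℂ)) = (u:ℂ) / ((1:ℂ)+u)^2 := by
      push_cast
      field_simp
      try ring
      try exact Or.inl trivial
      try (left; ring)
    rw [hD]
    field_simp
    try ring
    try exact Or.inl trivial
  simp only [Complex.real_smul]
  rw [key1, key2, keyw, abs_of_pos (by positivity : (0:ℝ) < ((1+u)^2)⁻¹), key3]
  rw [div_eq_mul_inv, ← Complex.cpow_neg]
  have hexp : ((1:ℂ)+u)^(-(2:ℂ)) * (((1:ℂ)+u)^(-(x-1)) * ((1:ℂ)+u)^(-(y-1))) =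
      ((1:ℂ)+u)^(-(x+y)) := by
    rw [← Complex.cpow_add _ _ hvC, ← Complex.cpow_add _ _ hvC]
    congr 1
    ring
  linear_combination ((u:ℂ)^(x-1) * wright α β (-2 * (p:ℂ) - (p:ℂ) * ((u:ℂ) + (u:ℂ)⁻¹))) * hexp
end

section
/- Let α, β be complex numbers with Re(α) > 0 and Re(β) > 1, let p > 0 be real, let a, b, c be complex with Re(c) > Re(b) > 0, and let n be a natural number. Then for |z| < 1 the n-th derivative of the Ψ-Gauss hypergeometric function in z satisfies d^n/dz^n [ᴪF_p^{(α,β)}(a,b;c;z)] = ((a)_n (b)_n / (c)_n) · ᴪF_p^{(α,β)}(a+n, b+n; c+n; z), where (λ)_n is the Pochhammer symbol. -/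
open MeasureTheory Real Set

/-! ### Auxiliary lemmas -/

lemma poch_succ_left (x : ℂ) (n : ℕ) : poch x (n + 1) = x * poch (x + 1) n := by
  simp [poch, ascPochhammer_succ_left, Polynomial.eval_mul, Polynomial.eval_comp]

lemma poch_succ_right (x : ℂ) (n : ℕ) : poch x (n + 1) = poch x n * (x + n) :=
  ascPochhammer_succ_eval n x

lemma norm_poch_le (a : ℂ) (m : ℕ) :
    ‖poch a m‖ ≤ (m.factorial : ℝ) * ((m : ℝ) + 1) ^ (⌈‖a‖⌉₊) := by
  set N : ℕ := ⌈‖a‖⌉₊ with hN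
  have haN : ‖a‖ ≤ N := Nat.le_ceil _
  induction m with
  | zero => simp [poch]
  | succ m ih =>
    have h1 : ‖poch a (m+1)‖ ≤ ‖poch a m‖ * (‖a‖ + m) := by
      rw [poch_succ_right, norm_mul]
      gcongr
      calc ‖a + (m:ℂ)‖ ≤ ‖a‖ + ‖(m:ℂ)‖ := norm_add_le _ _
        _ = ‖a‖ + m := by simp
    have hkey : ((m:ℝ) + 1) ^ N * ((N:ℝ) + m) ≤ ((m:ℝ) + 1) * ((m:ℝ) + 2) ^ N := by
      set t : ℝ := (m:ℝ) + 1 with ht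
      have ht0 : (0:ℝ) < t := by positivity
      have hbern : (1:ℝ) + N * (1/t) ≤ (1 + 1/t) ^ N := by
        apply one_add_mul_le_pow
        have : (0:ℝ) ≤ 1/t := by positivity
        linarith
      have h2 : ((1:ℝ) + 1/t) ^ N * t ^ N = (t + 1) ^ N := by
        rw [← mul_pow]
        congr 1
        field_simp
      have h3 : ((1:ℝ) + N * (1/t)) * t ^ N ≤ (t + 1) ^ N := by
        calc ((1:ℝ) + N * (1/t)) * t ^ N ≤ ((1 + 1/t) ^ N) * t ^ N :=
              mul_le_mul_of_nonneg_right hbern (by positivity)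
          _ = (t + 1) ^ N := h2
      have h5 : t ^ N * ((t:ℝ) + N) ≤ t * (t + 1) ^ N := by
        have ht' : t ^ N * ((t + N)/t) ≤ (t+1)^N := by
          calc t ^ N * ((t + N)/t) = (1 + N * (1/t)) * t ^ N := by field_simp
            _ ≤ (t+1)^N := h3
        calc t ^ N * (t + N) = (t ^ N * ((t + N)/t)) * t := by field_simp
          _ ≤ (t+1)^N * t := mul_le_mul_of_nonneg_right ht' (le_of_lt ht0)
          _ = t * (t+1)^N := by ring
      calc t ^ N * ((N:ℝ) + m) ≤ t ^ N * (t + N) := by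
            have hh : ((N:ℝ) + m) ≤ t + N := by rw [ht]; linarith
            exact mul_le_mul_of_nonneg_left hh (by positivity)
        _ ≤ t * (t + 1) ^ N := h5
        _ = t * ((m:ℝ) + 2) ^ N := by rw [ht]; ring_nf
    calc ‖poch a (m+1)‖ ≤ ‖poch a m‖ * (‖a‖ + m) := h1
      _ ≤ ((m.factorial : ℝ) * ((m:ℝ)+1)^N) * ((N:ℝ) + m) := by
          apply mul_le_mul ih
          · linarith
          · positivity
          · positivity
      _ = (m.factorial : ℝ) * (((m:ℝ)+1)^N * ((N:ℝ) + m)) := by ring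
      _ ≤ (m.factorial : ℝ) * (((m:ℝ)+1) * ((m:ℝ)+2)^N) :=
          mul_le_mul_of_nonneg_left hkey (by positivity)
      _ = ((m+1).factorial : ℝ) * ((↑(m+1) : ℝ) + 1) ^ N := by
          rw [Nat.factorial_succ]
          push_cast
          ring

lemma psiBeta_unif_bound (α β : ℂ) (p : ℝ) (b y : ℂ) :
    ∃ C : ℝ, 0 ≤ C ∧ ∀ m : ℕ, ‖psiBeta α β p (b + m) y‖ ≤ C := by
  classical
  set f : ℕ → ℝ → ℂ := fun m t => (t : ℂ) ^ (b + m - 1) * ((1 : ℂ) - t) ^ (y - 1) *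
    wright α β (-(p : ℂ) / (t * (1 - t))) with hf
  have hrepr : ∀ m : ℕ, psiBeta α β p (b + m) y = ∫ t in (0:ℝ)..1, f m t := fun m => rfl
  have hpow : ∀ (m k : ℕ), k ≤ m → ∀ t ∈ Ioo (0:ℝ) 1, f m t = (t:ℂ) ^ (m - k) * f k t := by
    intro m k hk t ht
    have ht0 : (t:ℂ) ≠ 0 := by
      exact_mod_cast ne_of_gt ht.1
    have harg : b + (m:ℂ) - 1 = (b + (k:ℂ) - 1) + ((m - k : ℕ) : ℂ) := by
      have : ((m - k : ℕ) : ℂ) = (m : ℂ) - (k : ℂ) := by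
        push_cast [Nat.cast_sub hk]; ring
      rw [this]; ring
    simp only [hf]
    rw [harg, Complex.cpow_add _ _ ht0, Complex.cpow_natCast]
    ring
  have hnorm : ∀ (m k : ℕ), k ≤ m → ∀ t ∈ Ioo (0:ℝ) 1, ‖f m t‖ ≤ ‖f k t‖ := by
    intro m k hk t ht
    rw [hpow m k hk t ht, norm_mul]
    have h1 : ‖(t:ℂ) ^ (m - k)‖ ≤ 1 := by
      rw [norm_pow, Complex.norm_real, Real.norm_eq_abs, abs_of_pos ht.1]
      exact pow_le_one₀ (le_of_lt ht.1) (le_of_lt ht.2)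
    calc ‖(t:ℂ) ^ (m - k)‖ * ‖f k t‖ ≤ 1 * ‖f k t‖ :=
          mul_le_mul_of_nonneg_right h1 (norm_nonneg _)
      _ = ‖f k t‖ := one_mul _
  by_cases hex : ∃ m, IntervalIntegrable (f m) volume 0 1
  · set m₀ := Nat.find hex with hm₀
    have h₀ : IntervalIntegrable (f m₀) volume 0 1 := Nat.find_spec hex
    have h₀' : IntegrableOn (f m₀) (Ioo (0:ℝ) 1) volume := by
      have := (intervalIntegrable_iff_integrableOn_Ioc_of_le (by norm_num : (0:ℝ) ≤ 1)).1 h₀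
      exact this.mono_set Ioo_subset_Ioc_self
    refine ⟨∫ t in Ioo (0:ℝ) 1, ‖f m₀ t‖, integral_nonneg fun t => norm_nonneg _, fun m => ?_⟩
    by_cases hm : IntervalIntegrable (f m) volume 0 1
    · have hm₀le : m₀ ≤ m := Nat.find_le hm
      have hm' : IntegrableOn (f m) (Ioo (0:ℝ) 1) volume := by
        have := (intervalIntegrable_iff_integrableOn_Ioc_of_le (by norm_num : (0:ℝ) ≤ 1)).1 hm
        exact this.mono_set Ioo_subset_Ioc_self
      rw [hrepr m, intervalIntegral.integral_of_le (by norm_num : (0:ℝ) ≤ 1),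
        integral_Ioc_eq_integral_Ioo]
      calc ‖∫ t in Ioo (0:ℝ) 1, f m t‖ ≤ ∫ t in Ioo (0:ℝ) 1, ‖f m t‖ :=
            norm_integral_le_integral_norm _
        _ ≤ ∫ t in Ioo (0:ℝ) 1, ‖f m₀ t‖ := by
            apply setIntegral_mono_on hm'.norm h₀'.norm measurableSet_Ioo
            intro t ht
            exact hnorm m m₀ hm₀le t ht
    · rw [hrepr m, intervalIntegral.integral_undef hm, norm_zero]
      exact integral_nonneg fun t => norm_nonneg _
  · refine ⟨0, le_refl _, fun m => ?_⟩
    rw [hrepr m, intervalIntegral.integral_undef fun h => hex ⟨m, h⟩, norm_zero]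

open Metric in
lemma tsum_pow_hasDerivAt (v : ℕ → ℂ) (C : ℝ) (N : ℕ)
    (hv : ∀ m : ℕ, ‖v m‖ ≤ C * ((m:ℝ) + 1) ^ N) {z : ℂ} (hz : ‖z‖ < 1) :
    HasDerivAt (fun w : ℂ => ∑' m : ℕ, v m * w ^ m)
      (∑' m : ℕ, v (m + 1) * ((m:ℂ) + 1) * z ^ m) z := by
  have hC0 : 0 ≤ C := le_trans (norm_nonneg (v 0)) (by simpa using hv 0)
  set r : ℝ := (1 + ‖z‖) / 2 with hr
  have hr0 : 0 < r := by positivity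
  have hzr : ‖z‖ < r := by rw [hr]; linarith
  have hr1 : r < 1 := by rw [hr]; linarith
  set u : ℕ → ℝ := fun m => (C / r) * (((m:ℝ) + 1) ^ (N + 1) * r ^ m) with hu
  have husum : Summable u := by
    have h1 : Summable (fun m : ℕ => ((m:ℝ)) ^ (N + 1) * r ^ m) :=
      summable_pow_mul_geometric_of_norm_lt_one (N + 1)
        (by rw [Real.norm_eq_abs, abs_of_pos hr0]; exact hr1)
    have h2 : Summable (fun m : ℕ => ((m:ℝ) + 1) ^ (N + 1) * r ^ (m + 1)) := by
      have := (summable_nat_add_iff 1).2 h1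
      simpa using this
    have h3 : Summable (fun m : ℕ => ((m:ℝ) + 1) ^ (N + 1) * r ^ m) := by
      have := h2.mul_left r⁻¹
      apply this.congr
      intro m
      field_simp
      ring
    exact h3.mul_left _
  have hderiv : ∀ (m : ℕ) (w : ℂ), w ∈ ball (0:ℂ) r →
      HasDerivAt (fun w : ℂ => v m * w ^ m) (v m * ((m:ℂ) * w ^ (m - 1))) w :=
    fun m w _ => (hasDerivAt_pow m w).const_mul (v m)
  have hbound : ∀ (m : ℕ) (w : ℂ), w ∈ ball (0:ℂ) r →
      ‖v m * ((m:ℂ) * w ^ (m - 1))‖ ≤ u m := by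
    intro m w hw
    have hwr : ‖w‖ ≤ r := le_of_lt (mem_ball_zero_iff.1 hw)
    have hw0 : 0 ≤ ‖w‖ := norm_nonneg _
    have key : (m:ℝ) * ‖w‖ ^ (m - 1) ≤ ((m:ℝ) + 1) * r ^ m / r := by
      cases m with
      | zero => simp; positivity
      | succ j =>
        have hwj : ‖w‖ ^ j ≤ r ^ j := pow_le_pow_left₀ hw0 hwr j
        rw [Nat.add_sub_cancel]
        push_cast
        have hrm : ((j:ℝ) + 1 + 1) * r ^ (j + 1) / r = ((j:ℝ) + 1 + 1) * r ^ j := by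
          rw [pow_succ]
          field_simp
        rw [hrm]
        have h1 : ((j:ℝ) + 1) * ‖w‖ ^ j ≤ ((j:ℝ) + 1) * r ^ j :=
          mul_le_mul_of_nonneg_left hwj (by positivity)
        have hrj : (0:ℝ) ≤ r ^ j := by positivity
        linarith
    calc ‖v m * ((m:ℂ) * w ^ (m - 1))‖ = ‖v m‖ * ((m:ℝ) * ‖w‖ ^ (m - 1)) := by
          rw [norm_mul, norm_mul, norm_pow, Complex.norm_natCast]
      _ ≤ (C * ((m:ℝ) + 1) ^ N) * (((m:ℝ) + 1) * r ^ m / r) := by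
          apply mul_le_mul (hv m) key (by positivity)
          positivity
      _ = u m := by
          rw [hu]
          simp only
          rw [pow_succ]
          field_simp
  have hsum0 : Summable (fun m : ℕ => v m * (0:ℂ) ^ m) := by
    apply summable_of_ne_finset_zero (s := {0})
    intro m hm
    have : m ≠ 0 := by simpa using hm
    simp [zero_pow this]
  have := hasDerivAt_tsum_of_isPreconnected husum isOpen_ball
    (convex_ball (0:ℂ) r).isPreconnected hderiv hbound
    (mem_ball_self hr0) hsum0 (mem_ball_zero_iff.2 hzr)
  have hsum' : Summable (fun m : ℕ => v m * ((m:ℂ) * z ^ (m - 1))) :=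
    Summable.of_norm_bounded husum fun m => hbound m z (mem_ball_zero_iff.2 hzr)
  have hshift : (∑' m : ℕ, v m * ((m:ℂ) * z ^ (m - 1)))
      = ∑' m : ℕ, v (m + 1) * ((m:ℂ) + 1) * z ^ m := by
    rw [Summable.tsum_eq_zero_add hsum']
    simp only [Nat.cast_zero, zero_mul, mul_zero, zero_add, Nat.add_sub_cancel]
    apply tsum_congr
    intro m
    push_cast
    ring
  rw [hshift] at this
  exact this

lemma eulerBeta_succ (b c : ℂ) (hb : 0 < b.re) (hc : 0 < c.re) :
    eulerBeta (b + 1) (c - b) = b / c * eulerBeta b (c - b) := by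
  have hb0 : b ≠ 0 := fun h => by simp [h] at hb
  have hc0 : c ≠ 0 := fun h => by simp [h] at hc
  unfold eulerBeta
  rw [Complex.Gamma_add_one b hb0, show b + 1 + (c - b) = c + 1 by ring,
    Complex.Gamma_add_one c hc0]
  ring

lemma psiF_hasDerivAt (α β : ℂ) (p : ℝ) (a b c : ℂ) (hb : 0 < b.re) (hcb : b.re < c.re)
    {z : ℂ} (hz : ‖z‖ < 1) :
    HasDerivAt (fun w => psiF α β p a b c w)
      (a * b / c * psiF α β p (a + 1) (b + 1) (c + 1) z) z := by
  have hc : 0 < c.re := hb.trans hcb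
  have hb0 : b ≠ 0 := fun h => by simp [h] at hb
  have hc0 : c ≠ 0 := fun h => by simp [h] at hc
  obtain ⟨C, hC0, hC⟩ := psiBeta_unif_bound α β p b (c - b)
  set B : ℂ := eulerBeta b (c - b) with hB
  set v : ℕ → ℂ := fun m =>
    poch a m * (psiBeta α β p (b + m) (c - b) / B) / (m.factorial : ℂ) with hv
  have hFun : (fun w => psiF α β p a b c w) = fun w => ∑' m : ℕ, v m * w ^ m := by
    funext w
    simp only [psiF, hv, ← hB]
    apply tsum_congr
    intro m
    ring
  set N : ℕ := ⌈‖a‖⌉₊ with hN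
  have hvb : ∀ m : ℕ, ‖v m‖ ≤ (C / ‖B‖) * ((m:ℝ) + 1) ^ N := by
    intro m
    have hfac : (0:ℝ) < (m.factorial : ℝ) := by
      exact_mod_cast Nat.factorial_pos m
    have heq : ‖v m‖ =
        ‖poch a m‖ * (‖psiBeta α β p (b + m) (c - b)‖ / ‖B‖) / (m.factorial : ℝ) := by
      simp only [hv]
      rw [norm_div, norm_mul, norm_div, Complex.norm_natCast]
    rw [heq]
    have h1 : ‖poch a m‖ * (‖psiBeta α β p (b + m) (c - b)‖ / ‖B‖)
        ≤ ((m.factorial : ℝ) * ((m:ℝ) + 1) ^ N) * (C / ‖B‖) := by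
      apply mul_le_mul (norm_poch_le a m) ?_ (by positivity) (by positivity)
      rw [div_eq_mul_inv, div_eq_mul_inv]
      exact mul_le_mul_of_nonneg_right (hC m) (by positivity)
    calc ‖poch a m‖ * (‖psiBeta α β p (b + m) (c - b)‖ / ‖B‖) / (m.factorial : ℝ)
        ≤ ((m.factorial : ℝ) * ((m:ℝ) + 1) ^ N) * (C / ‖B‖) / (m.factorial : ℝ) :=
          (div_le_div_iff_of_pos_right hfac).2 h1
      _ = (C / ‖B‖) * ((m:ℝ) + 1) ^ N := by
          rw [mul_comm, mul_div_assoc, mul_div_cancel_left₀ _ (ne_of_gt hfac)]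
  have key := tsum_pow_hasDerivAt v (C / ‖B‖) N hvb hz
  have hval : a * b / c * psiF α β p (a + 1) (b + 1) (c + 1) z
      = ∑' m : ℕ, v (m + 1) * ((m:ℂ) + 1) * z ^ m := by
    simp only [psiF]
    rw [show c + 1 - (b + 1) = c - b by ring, eulerBeta_succ b c hb hc, ← hB, ← tsum_mul_left]
    apply tsum_congr
    intro k
    have hb1 : b + 1 + (k:ℂ) = b + ((k + 1 : ℕ) : ℂ) := by push_cast; ring
    rw [hb1]
    simp only [hv]
    rw [poch_succ_left]
    have hfact : ((k + 1).factorial : ℂ) = ((k:ℂ) + 1) * (k.factorial : ℂ) := by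
      push_cast [Nat.factorial_succ]
      ring
    rw [hfact]
    have hk1 : ((k:ℂ) + 1) ≠ 0 := Nat.cast_add_one_ne_zero k
    have hkf : ((k.factorial : ℂ)) ≠ 0 := by
      exact_mod_cast Nat.factorial_ne_zero k
    rcases eq_or_ne B 0 with hB0 | hB0
    · simp [hB0]
    · field_simp
  rw [hFun, hval]
  exact key

lemma iteratedDeriv_const_mul'' (n : ℕ) (k : ℂ) :
    ∀ f : ℂ → ℂ, iteratedDeriv n (fun w => k * f w) = fun z => k * iteratedDeriv n f z := by
  induction n with
  | zero => intro f; simp [iteratedDeriv_zero]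
  | succ n ih =>
    intro f
    rw [iteratedDeriv_succ', iteratedDeriv_succ']
    rw [show deriv (fun w => k * f w) = fun w => k * deriv f w from
      funext fun w => deriv_const_mul_field k]
    exact ih (deriv f)

lemma iteratedDeriv_congr_open {f g : ℂ → ℂ} {s : Set ℂ} (hs : IsOpen s)
    (hfg : Set.EqOn f g s) (n : ℕ) : Set.EqOn (iteratedDeriv n f) (iteratedDeriv n g) s := by
  induction n with
  | zero => simpa [iteratedDeriv_zero] using hfg
  | succ n ih =>
    intro x hx
    rw [iteratedDeriv_succ, iteratedDeriv_succ]
    exact Filter.EventuallyEq.deriv_eq (Filter.eventuallyEq_of_mem (hs.mem_nhds hx) ih)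

lemma psiF_iteratedDeriv_aux (α β : ℂ) (p : ℝ) :
    ∀ (n : ℕ) (a b c : ℂ), 0 < b.re → b.re < c.re → ∀ z : ℂ, ‖z‖ < 1 →
      iteratedDeriv n (fun w => psiF α β p a b c w) z =
        poch a n * poch b n / poch c n * psiF α β p (a + n) (b + n) (c + n) z := by
  intro n
  induction n with
  | zero =>
    intro a b c _ _ z _
    simp [poch, iteratedDeriv_zero]
  | succ n ih =>
    intro a b c hb hcb z hz
    have hb1 : 0 < (b + 1).re := by
      simp only [Complex.add_re, Complex.one_re]; linarith
    have hcb1 : (b + 1).re < (c + 1).re := by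
      simp only [Complex.add_re, Complex.one_re]; linarith
    rw [iteratedDeriv_succ']
    have hEq : Set.EqOn (deriv fun w => psiF α β p a b c w)
        (fun w => a * b / c * psiF α β p (a + 1) (b + 1) (c + 1) w) (Metric.ball (0:ℂ) 1) := by
      intro w hw
      exact (psiF_hasDerivAt α β p a b c hb hcb (mem_ball_zero_iff.1 hw)).deriv
    rw [iteratedDeriv_congr_open Metric.isOpen_ball hEq n (mem_ball_zero_iff.2 hz)]
    simp only [iteratedDeriv_const_mul'' n (a * b / c)
      (fun w => psiF α β p (a + 1) (b + 1) (c + 1) w)]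
    rw [ih (a + 1) (b + 1) (c + 1) hb1 hcb1 z hz]
    rw [show a + 1 + (n:ℂ) = a + ((n + 1 : ℕ) : ℂ) by push_cast; ring,
      show b + 1 + (n:ℂ) = b + ((n + 1 : ℕ) : ℂ) by push_cast; ring,
      show c + 1 + (n:ℂ) = c + ((n + 1 : ℕ) : ℂ) by push_cast; ring,
      poch_succ_left a n, poch_succ_left b n, poch_succ_left c n]
    ring

theorem psiF_iteratedDeriv (α β : ℂ) (p : ℝ) (a b c : ℂ) (n : ℕ)
    (hα : 0 < α.re) (hβ : 1 < β.re) (hp : 0 < p)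
    (hb : 0 < b.re) (hcb : b.re < c.re) :
    ∀ z : ℂ, ‖z‖ < 1 →
      iteratedDeriv n (fun w => psiF α β p a b c w) z =
        poch a n * poch b n / poch c n * psiF α β p (a + n) (b + n) (c + n) z := by
  intro z hz
  exact psiF_iteratedDeriv_aux α β p n a b c hb hcb z hz
end

section
/- Let α, β be complex numbers with Re(α) > 0 and Re(β) > 1, let p > 0 be real, let b, c be complex with Re(c) > Re(b) > 0, and let n be a natural number. Then the n-th derivative of the Ψ-confluent hypergeometric function in z satisfies d^n/dz^n [ᴪΦ_p^{(α,β)}(b;c;z)] = ((b)_n / (c)_n) · ᴪΦ_p^{(α,β)}(b+n; c+n; z), where (λ)_n is the Pochhammer symbol. -/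
open MeasureTheory Real Set

lemma gamma_add_nat' {x : ℂ} (hx : 0 < x.re) (n : ℕ) :
    Complex.Gamma (x + n) = poch x n * Complex.Gamma x := by
  induction n with
  | zero => simp [poch]
  | succ n ih =>
    have hre : 0 < (x + n).re := by
      simp only [Complex.add_re, Complex.natCast_re]; positivity
    have hne : x + (n:ℂ) ≠ 0 := fun h => by simp [h] at hre
    have h1 : Complex.Gamma (x + (n+1:ℕ)) = (x + n) * Complex.Gamma (x + n) := by
      rw [show (x + ((n:ℕ)+1:ℕ) : ℂ) = (x + n) + 1 by push_cast; ring]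
      exact Complex.Gamma_add_one _ hne
    rw [h1, ih]
    simp only [poch, ascPochhammer_succ_right, Polynomial.eval_mul, Polynomial.eval_add,
      Polynomial.eval_X, Polynomial.eval_natCast]
    ring

lemma poch_ne_zero' {x : ℂ} (hx : 0 < x.re) (n : ℕ) : poch x n ≠ 0 := by
  have h1 : Complex.Gamma (x + n) ≠ 0 :=
    Complex.Gamma_ne_zero_of_re_pos (by simp only [Complex.add_re, Complex.natCast_re]; positivity)
  rw [gamma_add_nat' hx n] at h1
  exact fun h => h1 (by simp [h])

lemma hasDerivAt_tsum_pow (a : ℕ → ℂ) (C : ℝ) (h : ∀ k, ‖a k‖ ≤ C) (z : ℂ) :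
    HasDerivAt (fun w => ∑' k : ℕ, a k * w ^ k / (k.factorial : ℂ))
      (∑' k : ℕ, a (k + 1) * z ^ k / (k.factorial : ℂ)) z := by
  have hC : 0 ≤ C := le_trans (norm_nonneg _) (h 0)
  set R : ℝ := ‖z‖ + 1 with hR
  have hR0 : 0 < R := by positivity
  have hzR : z ∈ Metric.ball (0:ℂ) R := by
    rw [Metric.mem_ball, dist_zero_right]; simp [hR]
  set u : ℕ → ℝ := fun k => C * ((k : ℝ) * R ^ (k-1)) / (k.factorial : ℝ) with hu_def
  have hu : Summable u := by
    rw [← summable_nat_add_iff 1]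
    have he : (fun k => u (k+1)) = fun k : ℕ => C * (R ^ k / (k.factorial : ℝ)) := by
      funext k
      simp only [hu_def, Nat.add_sub_cancel, Nat.factorial_succ, Nat.cast_mul, Nat.cast_add,
        Nat.cast_one]
      have : ((k:ℝ) + 1) ≠ 0 := by positivity
      field_simp
    rw [he]
    exact (Real.summable_pow_div_factorial R).mul_left C
  have hbnd : ∀ k : ℕ, ∀ y : ℂ, y ∈ Metric.ball (0:ℂ) R →
      ‖a k * ((k : ℂ) * y ^ (k-1)) / (k.factorial : ℂ)‖ ≤ u k := by
    intro k y hy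
    have hyR : ‖y‖ ≤ R := le_of_lt (by rwa [Metric.mem_ball, dist_zero_right] at hy)
    rw [norm_div, norm_mul, norm_mul, norm_pow, Complex.norm_natCast, Complex.norm_natCast]
    simp only [hu_def]
    gcongr
    exact h k
  have hsum0 : Summable fun k : ℕ => a k * (0:ℂ) ^ k / (k.factorial : ℂ) := by
    apply summable_of_ne_finset_zero (s := {0})
    intro k hk
    simp only [Finset.mem_singleton] at hk
    rw [zero_pow hk]
    simp
  have main := hasDerivAt_tsum_of_isPreconnected hu Metric.isOpen_ball
    ((convex_ball (0:ℂ) R).isPreconnected)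
    (fun (k : ℕ) (y : ℂ) (_ : y ∈ Metric.ball (0:ℂ) R) =>
      ((hasDerivAt_pow k y).const_mul (a k)).div_const (k.factorial : ℂ))
    hbnd (Metric.mem_ball_self hR0) hsum0 hzR
  have hsumd : Summable fun k : ℕ => a k * ((k : ℂ) * z ^ (k-1)) / (k.factorial : ℂ) :=
    Summable.of_norm_bounded hu (fun k => hbnd k z hzR)
  have hval : (∑' k : ℕ, a k * ((k : ℂ) * z ^ (k-1)) / (k.factorial : ℂ))
      = ∑' k : ℕ, a (k + 1) * z ^ k / (k.factorial : ℂ) := by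
    rw [Summable.tsum_eq_zero_add hsumd]
    simp only [Nat.cast_zero, zero_mul, mul_zero, zero_div, zero_add, Nat.add_sub_cancel]
    apply tsum_congr
    intro k
    have hk1 : ((k:ℂ) + 1) ≠ 0 := by
      exact_mod_cast (Nat.cast_ne_zero (R := ℂ)).2 (Nat.succ_ne_zero k)
    have hfk : ((k.factorial : ℂ)) ≠ 0 := Nat.cast_ne_zero.2 k.factorial_ne_zero
    rw [Nat.factorial_succ]
    push_cast
    field_simp
  rw [← hval]
  exact main

lemma iteratedDeriv_tsum_pow (n : ℕ) : ∀ (a : ℕ → ℂ) (C : ℝ), (∀ k, ‖a k‖ ≤ C) → ∀ z : ℂ,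
    iteratedDeriv n (fun w => ∑' k : ℕ, a k * w ^ k / (k.factorial : ℂ)) z
      = ∑' k : ℕ, a (k + n) * z ^ k / (k.factorial : ℂ) := by
  induction n with
  | zero => intro a C h z; simp
  | succ n ih =>
    intro a C h z
    rw [iteratedDeriv_succ']
    have hderiv : (deriv fun w => ∑' k : ℕ, a k * w ^ k / (k.factorial:ℂ))
        = fun w => ∑' k : ℕ, a (k+1) * w ^ k / (k.factorial:ℂ) := by
      funext w; exact (hasDerivAt_tsum_pow a C h w).deriv
    rw [hderiv, ih (fun k => a (k+1)) C (fun k => h _) z]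
    apply tsum_congr
    intro k
    rfl

lemma psiBeta_bound (α β : ℂ) (p : ℝ) (b c : ℂ) :
    ∃ C : ℝ, ∀ k : ℕ, ‖psiBeta α β p (b + k) (c - b)‖ ≤ C := by
  set W : ℝ → ℂ := fun t => wright α β (-(p:ℂ) / (t * (1 - t))) with hW
  set F : ℕ → ℝ → ℂ := fun k t =>
    (t:ℂ) ^ ((b + k) - 1) * ((1:ℂ) - t) ^ ((c - b) - 1) * W t with hF
  have hpsi : ∀ k : ℕ, psiBeta α β p (b + k) (c - b) = ∫ t in (0:ℝ)..1, F k t :=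
    fun k => rfl
  by_cases hI : ∃ k₀ : ℕ, IntervalIntegrable (F k₀) volume 0 1
  · obtain ⟨k₀, hk₀⟩ := hI
    have hk₀' : IntegrableOn (F k₀) (Ioc (0:ℝ) 1) volume :=
      (intervalIntegrable_iff_integrableOn_Ioc_of_le zero_le_one).1 hk₀
    set M : ℝ := ∫ t in Ioc (0:ℝ) 1, ‖F k₀ t‖ with hM
    have hM0 : 0 ≤ M := integral_nonneg fun t => norm_nonneg _
    set S : ℝ := ∑ j ∈ Finset.range (k₀+1), ‖psiBeta α β p (b + j) (c - b)‖ with hS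
    have hS0 : 0 ≤ S := Finset.sum_nonneg fun j _ => norm_nonneg _
    refine ⟨M + S, fun k => ?_⟩
    rcases le_or_gt k k₀ with hk | hk
    · have h1 : ‖psiBeta α β p (b + k) (c - b)‖ ≤ S :=
        Finset.single_le_sum (f := fun j : ℕ => ‖psiBeta α β p (b + j) (c - b)‖)
          (fun j _ => norm_nonneg _) (Finset.mem_range.2 (by omega))
      linarith
    · have hbound : ∀ t ∈ Ioc (0:ℝ) 1, ‖F k t‖ ≤ ‖F k₀ t‖ := by
        intro t ht
        obtain ⟨ht0, ht1⟩ := ht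
        have hre : ∀ m : ℕ, ((b + m) - 1).re = b.re + m - 1 := by
          intro m
          simp [Complex.add_re, Complex.sub_re, Complex.natCast_re, Complex.one_re]
        have hcpow : ∀ m : ℕ, ‖(t:ℂ) ^ ((b + m) - 1)‖ = t ^ (b.re + m - 1) := by
          intro m
          rw [Complex.norm_cpow_eq_rpow_re_of_pos ht0, hre]
        simp only [hF, norm_mul]
        gcongr
        rw [hcpow, hcpow]
        apply Real.rpow_le_rpow_of_exponent_ge ht0 ht1
        have : (k₀ : ℝ) ≤ (k : ℝ) := by exact_mod_cast hk.le
        linarith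
      calc ‖psiBeta α β p (b + k) (c - b)‖
          = ‖∫ t in Ioc (0:ℝ) 1, F k t‖ := by
            rw [hpsi, intervalIntegral.integral_of_le zero_le_one]
        _ ≤ ∫ t in Ioc (0:ℝ) 1, ‖F k t‖ := norm_integral_le_integral_norm _
        _ ≤ M := by
            apply integral_mono_of_nonneg
            · exact Filter.Eventually.of_forall fun t => norm_nonneg _
            · exact hk₀'.norm
            · exact ae_restrict_of_forall_mem measurableSet_Ioc hbound
        _ ≤ M + S := by linarith
  · push_neg at hI
    refine ⟨0, fun k => ?_⟩
    rw [hpsi, intervalIntegral.integral_undef (hI k)]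
    simp

theorem psiPhi_iteratedDeriv (α β : ℂ) (p : ℝ) (b c : ℂ) (n : ℕ)
    (hα : 0 < α.re) (hβ : 1 < β.re) (hp : 0 < p)
    (hb : 0 < b.re) (hcb : b.re < c.re) :
    ∀ z : ℂ, iteratedDeriv n (fun w => psiPhi α β p b c w) z =
      poch b n / poch c n * psiPhi α β p (b + n) (c + n) z := by
  intro z
  have hc : 0 < c.re := lt_trans hb hcb
  have hΓb : Complex.Gamma b ≠ 0 := Complex.Gamma_ne_zero_of_re_pos hb
  have hΓc : Complex.Gamma c ≠ 0 := Complex.Gamma_ne_zero_of_re_pos hc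
  have hΓcb : Complex.Gamma (c - b) ≠ 0 :=
    Complex.Gamma_ne_zero_of_re_pos (by simp [Complex.sub_re]; linarith)
  have hpb : poch b n ≠ 0 := poch_ne_zero' hb n
  have hpc : poch c n ≠ 0 := poch_ne_zero' hc n
  have hB : eulerBeta b (c - b) ≠ 0 := by
    unfold eulerBeta
    rw [show b + (c - b) = c by ring]
    exact div_ne_zero (mul_ne_zero hΓb hΓcb) hΓc
  have hB2 : eulerBeta (b + n) (c - b) ≠ 0 := by
    unfold eulerBeta
    rw [show (b + n) + (c - b) = c + n by ring]
    refine div_ne_zero (mul_ne_zero ?_ hΓcb) ?_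
    · exact Complex.Gamma_ne_zero_of_re_pos
        (by simp only [Complex.add_re, Complex.natCast_re]; positivity)
    · exact Complex.Gamma_ne_zero_of_re_pos
        (by simp only [Complex.add_re, Complex.natCast_re]; positivity)
  -- key relation between the two betas
  have e1 : eulerBeta (b + n) (c - b) * poch c n = eulerBeta b (c - b) * poch b n := by
    unfold eulerBeta
    rw [show (b + (n:ℂ)) + (c - b) = c + n by ring, show b + (c - b) = c by ring,
      gamma_add_nat' hb n, gamma_add_nat' hc n]
    field_simp
  obtain ⟨C, hC⟩ := psiBeta_bound α β p b c
  set a : ℕ → ℂ := fun k => psiBeta α β p (b + k) (c - b) / eulerBeta b (c - b) with ha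
  have hCa : ∀ k, ‖a k‖ ≤ C / ‖eulerBeta b (c - b)‖ := by
    intro k
    rw [ha]
    simp only [norm_div]
    gcongr
    exact hC k
  have hfun : (fun w => psiPhi α β p b c w)
      = fun w => ∑' k : ℕ, a k * w ^ k / (k.factorial : ℂ) := rfl
  rw [hfun, iteratedDeriv_tsum_pow n a _ hCa z]
  have hpsi2 : psiPhi α β p (b + n) (c + n) z
      = ∑' k : ℕ, (psiBeta α β p (b + ((k + n : ℕ) : ℂ)) (c - b) / eulerBeta (b + n) (c - b))
          * z ^ k / (k.factorial : ℂ) := by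
    unfold psiPhi
    apply tsum_congr
    intro k
    have h1 : (b + (n:ℂ)) + (k:ℂ) = b + ((k + n : ℕ) : ℂ) := by push_cast; ring
    have h2 : (c + (n:ℂ)) - (b + (n:ℂ)) = c - b := by ring
    rw [h1, h2]
  rw [hpsi2, ← tsum_mul_left]
  apply tsum_congr
  intro k
  rw [ha]
  simp only
  set Ψ : ℂ := psiBeta α β p (b + ((k + n : ℕ) : ℂ)) (c - b) with hΨ
  have key : (eulerBeta b (c - b))⁻¹ = poch b n / poch c n / eulerBeta (b + n) (c - b) := by
    rw [div_div, eq_comm, div_eq_iff (mul_ne_zero hpc hB2), inv_mul_eq_div, eq_div_iff hB]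
    linear_combination -e1
  calc Ψ / eulerBeta b (c - b) * z ^ k / (k.factorial : ℂ)
      = (eulerBeta b (c - b))⁻¹ * Ψ * z ^ k / (k.factorial : ℂ) := by ring
    _ = (poch b n / poch c n / eulerBeta (b + n) (c - b)) * Ψ * z ^ k / (k.factorial : ℂ) := by
        rw [key]
    _ = poch b n / poch c n * (Ψ / eulerBeta (b + n) (c - b) * z ^ k / (k.factorial : ℂ)) := by
        ring
end
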